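/- Let R(τ) = d₀·(K/(2^{M/(τhB)} - 1))^{1/ψ} with all constants positive. Then the second derivative of R at any τ > 0 equals D₁(τ)·D₂(τ), where D₁(τ) = (M·d₀·ln2/(h²B²ψ²))·K^{1/ψ}·2^{M/(τhB)}/(τ⁴·(2^{M/(τhB)}-1)^{2+1/ψ}) > 0 and D₂(τ) = 2τhBψ(1 - 2^{M/(τhB)}) + M·ln2·(ψ + 2^{M/(τhB)}). In particular, if D₂(τ) < 0 for all τ > 0, then R is strictly concave on (0,∞). -/

import Mathlib

/-- The communication radius as a function of the transmission time `τ`. -/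
noncomputable def commRadius (d₀ K M h B ψ : ℝ) (τ : ℝ) : ℝ :=
  d₀ * (K / ((2 : ℝ) ^ (M / (τ * h * B)) - 1)) ^ (1 / ψ)

/-- The positive factor `D₁(τ)` in the second derivative of the communication radius. -/
noncomputable def D₁fun (d₀ K M h B ψ : ℝ) (τ : ℝ) : ℝ :=
  (M * d₀ * Real.log 2 / (h ^ 2 * B ^ 2 * ψ ^ 2)) * K ^ (1 / ψ)
    * (2 : ℝ) ^ (M / (τ * h * B))
    / (τ ^ 4 * ((2 : ℝ) ^ (M / (τ * h * B)) - 1) ^ (2 + 1 / ψ))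

/-- The factor `D₂(τ)` in the second derivative of the communication radius. -/
noncomputable def D₂fun (M h B ψ : ℝ) (τ : ℝ) : ℝ :=
  2 * τ * h * B * ψ * (1 - (2 : ℝ) ^ (M / (τ * h * B)))
    + M * Real.log 2 * (ψ + (2 : ℝ) ^ (M / (τ * h * B)))


noncomputable def Efun (M h B : ℝ) (τ : ℝ) : ℝ := (2 : ℝ) ^ (M / (τ * h * B))

noncomputable def R1 (d₀ K M h B ψ : ℝ) (τ : ℝ) : ℝ :=
  d₀ * K ^ (1/ψ) * (M * Real.log 2 / (h * B * ψ)) * Efun M h B τ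
    / (τ ^ 2 * (Efun M h B τ - 1) ^ (1 + 1/ψ))

lemma hasDerivAt_Efun (M h B : ℝ) (hM : 0 < M) (hh : 0 < h) (hB : 0 < B)
    {τ : ℝ} (hτ : 0 < τ) :
    HasDerivAt (Efun M h B)
      (Efun M h B τ * Real.log 2 * (-(M / (h * B)) / τ ^ 2)) τ := by
  have heq : Efun M h B = fun t => (2:ℝ) ^ ((M / (h * B)) * t⁻¹) := by
    funext t
    simp only [Efun]
    congr 1
    field_simp
  rw [heq]
  have hin : HasDerivAt (fun t : ℝ => (M / (h * B)) * t⁻¹)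
      ((M / (h * B)) * (-(τ ^ 2)⁻¹)) τ := (hasDerivAt_inv hτ.ne').const_mul _
  have := (Real.hasStrictDerivAt_const_rpow (by norm_num : (0:ℝ) < 2)
      ((M / (h * B)) * τ⁻¹)).hasDerivAt.comp τ hin
  refine this.congr_deriv (Eq.symm ?_)
  ring

lemma one_lt_Efun (M h B : ℝ) (hM : 0 < M) (hh : 0 < h) (hB : 0 < B)
    {τ : ℝ} (hτ : 0 < τ) : 1 < Efun M h B τ := by
  have : 0 < M / (τ * h * B) := by positivity
  exact Real.one_lt_rpow_iff_of_pos (by norm_num) |>.mpr (Or.inl ⟨by norm_num, this⟩)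

lemma hasDerivAt_commRadius (d₀ K M h B ψ : ℝ) (hd : 0 < d₀) (hK : 0 < K)
    (hM : 0 < M) (hh : 0 < h) (hB : 0 < B) (hψ : 0 < ψ)
    {τ : ℝ} (hτ : 0 < τ) :
    HasDerivAt (commRadius d₀ K M h B ψ) (R1 d₀ K M h B ψ τ) τ := by
  have hE1 := one_lt_Efun M h B hM hh hB hτ
  have hy : 0 < Efun M h B τ - 1 := by linarith
  -- commRadius agrees near τ with g
  have hev : commRadius d₀ K M h B ψ =ᶠ[nhds τ] fun t =>
      d₀ * K ^ (1/ψ) * ((Efun M h B t - 1) ^ (1/ψ))⁻¹ := by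
    filter_upwards [isOpen_Ioi.mem_nhds hτ] with t ht
    have hE1t := one_lt_Efun M h B hM hh hB ht
    have hyt : (0:ℝ) < Efun M h B t - 1 := by linarith
    simp only [commRadius, Efun] at *
    rw [Real.div_rpow hK.le hyt.le, div_eq_mul_inv]
    ring
  have hE := hasDerivAt_Efun M h B hM hh hB hτ
  have hpow : HasDerivAt (fun t => (Efun M h B t - 1) ^ (1/ψ))
      ((Efun M h B τ * Real.log 2 * (-(M / (h * B)) / τ ^ 2)) * (1/ψ)
        * (Efun M h B τ - 1) ^ (1/ψ - 1)) τ :=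
    (hE.sub_const 1).rpow_const (Or.inl hy.ne')
  have hne : (Efun M h B τ - 1) ^ (1/ψ) ≠ 0 := (Real.rpow_pos_of_pos hy _).ne'
  have hg := (hpow.inv hne).const_mul (d₀ * K ^ (1/ψ))
  refine HasDerivAt.congr_of_eventuallyEq ?_ hev
  refine hg.congr_deriv (Eq.symm ?_)
  simp only [R1]
  have h1 : (Efun M h B τ - 1) ^ (1 + 1/ψ)
      = (Efun M h B τ - 1) * (Efun M h B τ - 1) ^ (1/ψ) := by
    rw [Real.rpow_add hy, Real.rpow_one]
  have h2 : (Efun M h B τ - 1) ^ (1/ψ - 1)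
      = (Efun M h B τ - 1) ^ (1/ψ) / (Efun M h B τ - 1) := by
    rw [Real.rpow_sub hy, Real.rpow_one]
  rw [h1, h2]
  field_simp

lemma hasDerivAt_R1 (d₀ K M h B ψ : ℝ) (hd : 0 < d₀) (hK : 0 < K)
    (hM : 0 < M) (hh : 0 < h) (hB : 0 < B) (hψ : 0 < ψ)
    {τ : ℝ} (hτ : 0 < τ) :
    HasDerivAt (R1 d₀ K M h B ψ) (D₁fun d₀ K M h B ψ τ * D₂fun M h B ψ τ) τ := by
  have hE1 := one_lt_Efun M h B hM hh hB hτ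
  have hy : 0 < Efun M h B τ - 1 := by linarith
  have hE := hasDerivAt_Efun M h B hM hh hB hτ
  have hnum : HasDerivAt
      (fun t => d₀ * K ^ (1/ψ) * (M * Real.log 2 / (h * B * ψ)) * Efun M h B t)
      (d₀ * K ^ (1/ψ) * (M * Real.log 2 / (h * B * ψ))
        * (Efun M h B τ * Real.log 2 * (-(M / (h * B)) / τ ^ 2))) τ := by
    simpa [mul_assoc] using hE.const_mul (d₀ * K ^ (1/ψ) * (M * Real.log 2 / (h * B * ψ)))
  have hpow : HasDerivAt (fun t => (Efun M h B t - 1) ^ (1 + 1/ψ))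
      ((Efun M h B τ * Real.log 2 * (-(M / (h * B)) / τ ^ 2)) * (1 + 1/ψ)
        * (Efun M h B τ - 1) ^ (1 + 1/ψ - 1)) τ :=
    (hE.sub_const 1).rpow_const (Or.inl hy.ne')
  have hden := (hasDerivAt_pow 2 τ).mul hpow
  have hden_ne : τ ^ 2 * (Efun M h B τ - 1) ^ (1 + 1/ψ) ≠ 0 :=
    (mul_pos (pow_pos hτ 2) (Real.rpow_pos_of_pos hy _)).ne'
  have hq := hnum.div hden hden_ne
  have hR1 : R1 d₀ K M h B ψ = fun t =>
      d₀ * K ^ (1/ψ) * (M * Real.log 2 / (h * B * ψ)) * Efun M h B t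
        / (t ^ 2 * (Efun M h B t - 1) ^ (1 + 1/ψ)) := rfl
  rw [hR1]
  refine hq.congr_deriv (Eq.symm ?_)
  simp only [D₁fun, D₂fun, Efun, Pi.mul_apply]
  have hexp : (1 : ℝ) + 1/ψ - 1 = 1/ψ := by ring
  rw [hexp]
  set E := (2 : ℝ) ^ (M / (τ * h * B)) with hEdef
  have hy' : (0:ℝ) < E - 1 := hy
  have h1 : (E - 1) ^ ((1:ℝ) + 1/ψ) = (E - 1) * (E - 1) ^ (1/ψ) := by
    rw [Real.rpow_add hy', Real.rpow_one]
  have h3 : (E - 1) ^ ((2:ℝ) + 1/ψ) = (E - 1) * (E - 1) * (E - 1) ^ (1/ψ) := by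
    rw [show (2:ℝ) + 1/ψ = 1 + (1 + 1/ψ) by ring, Real.rpow_add hy', Real.rpow_one, h1]
    ring
  rw [h1, h3]
  have hyne : E - 1 ≠ 0 := hy'.ne'
  have hyp : (E - 1) ^ ((1:ℝ)/ψ) ≠ 0 := (Real.rpow_pos_of_pos hy' _).ne'
  field_simp
  ring

/-- The second derivative of the communication radius `R` at any `τ > 0` equals
`D₁(τ)·D₂(τ)` with `D₁(τ) > 0`; in particular, if `D₂ < 0` on `(0,∞)` then `R` is
strictly concave on `(0,∞)`. -/
theorem comm_radius_second_deriv (d₀ K M h B ψ : ℝ) (hd : 0 < d₀) (hK : 0 < K)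
    (hM : 0 < M) (hh : 0 < h) (hB : 0 < B) (hψ : 0 < ψ) :
    (∀ τ > (0 : ℝ),
      deriv (deriv (commRadius d₀ K M h B ψ)) τ
        = D₁fun d₀ K M h B ψ τ * D₂fun M h B ψ τ ∧ 0 < D₁fun d₀ K M h B ψ τ) ∧
    ((∀ τ > (0 : ℝ), D₂fun M h B ψ τ < 0) →
      StrictConcaveOn ℝ (Set.Ioi 0) (commRadius d₀ K M h B ψ)) := by
  have hfd : ∀ τ > (0:ℝ), HasDerivAt (commRadius d₀ K M h B ψ) (R1 d₀ K M h B ψ τ) τ :=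
    fun τ hτ => hasDerivAt_commRadius d₀ K M h B ψ hd hK hM hh hB hψ hτ
  have hderiv2 : ∀ τ > (0:ℝ), deriv (deriv (commRadius d₀ K M h B ψ)) τ
      = D₁fun d₀ K M h B ψ τ * D₂fun M h B ψ τ := by
    intro τ hτ
    have hev : deriv (commRadius d₀ K M h B ψ) =ᶠ[nhds τ] R1 d₀ K M h B ψ := by
      filter_upwards [isOpen_Ioi.mem_nhds hτ] with t ht
      exact (hfd t ht).deriv
    rw [hev.deriv_eq]
    exact (hasDerivAt_R1 d₀ K M h B ψ hd hK hM hh hB hψ hτ).deriv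
  have hD1pos : ∀ τ > (0:ℝ), 0 < D₁fun d₀ K M h B ψ τ := by
    intro τ hτ
    have hE1 : (1:ℝ) < (2:ℝ) ^ (M / (τ * h * B)) := one_lt_Efun M h B hM hh hB hτ
    have hy : (0:ℝ) < (2:ℝ) ^ (M / (τ * h * B)) - 1 := by linarith
    have hlog : (0:ℝ) < Real.log 2 := Real.log_pos (by norm_num)
    have hKp : (0:ℝ) < K ^ ((1:ℝ)/ψ) := Real.rpow_pos_of_pos hK _
    have hyp : (0:ℝ) < ((2:ℝ) ^ (M / (τ * h * B)) - 1) ^ ((2:ℝ) + 1/ψ) :=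
      Real.rpow_pos_of_pos hy _
    unfold D₁fun
    positivity
  refine ⟨fun τ hτ => ⟨hderiv2 τ hτ, hD1pos τ hτ⟩, fun hD2 => ?_⟩
  apply strictConcaveOn_of_deriv2_neg (convex_Ioi 0)
  · exact fun τ hτ => ((hfd τ hτ).continuousAt).continuousWithinAt
  · intro x hx
    rw [interior_Ioi] at hx
    have h2 := hderiv2 x hx
    show deriv^[2] _ x < 0
    simp only [Function.iterate_succ, Function.iterate_zero, Function.comp_apply, id_eq]
    rw [h2]
    exact mul_neg_of_pos_of_neg (hD1pos x hx) (hD2 x hx)
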